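/- arXiv:1512.07122 — 3 statements merged into one kernel-verified Lean document; each statement's English description precedes it below -/
import Mathlib

section
/- Let (X,μ) be a probability space and f, g ∈ L^∞(X,μ) nonnegative with f ≤ g a.e. Then f* ≤ g* pointwise on [0,1). Moreover, if additionally f* = g* on [0,1) then f = g almost everywhere. -/
open MeasureTheory

noncomputable def decRe {X : Type*} [MeasurableSpace X] (μ : Measure X) (f : X → ℝ) (s : ℝ) : ℝ :=
  sSup {t : ℝ | 0 ≤ t ∧ s < (μ {x | t < f x}).toReal}

lemma decRe_bddAbove {X : Type*} [MeasurableSpace X] (μ : Measure X) (f : X → ℝ) (C : ℝ)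
    (hC : ∀ x, f x ≤ C) (s : ℝ) (hs : 0 ≤ s) :
    BddAbove {t : ℝ | 0 ≤ t ∧ s < (μ {x | t < f x}).toReal} := by
  refine ⟨C, fun t ht => ?_⟩
  obtain ⟨ht0, hts⟩ := ht
  by_contra h
  push_neg at h
  have he : {x | t < f x} = ∅ := by
    ext x; simp only [Set.mem_setOf_eq, Set.mem_empty_iff_false, iff_false, not_lt]
    exact (hC x).trans h.le
  rw [he] at hts
  simp at hts
  exact absurd hts (not_lt.2 hs)

lemma decRe_nonneg {X : Type*} [MeasurableSpace X] (μ : Measure X) (f : X → ℝ) (s : ℝ) :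
    0 ≤ decRe μ f s :=
  Real.sSup_nonneg (fun _ ht => ht.1)

/-- monotonicity of the decreasing rearrangement, and the case of equality. -/
theorem decRe_mono_and_eq {X : Type*} [MeasurableSpace X] (μ : Measure X)
    [IsProbabilityMeasure μ] (f g : X → ℝ) (hf : Measurable f) (hg : Measurable g)
    (hfb : ∃ C : ℝ, ∀ x, f x ≤ C) (hgb : ∃ C : ℝ, ∀ x, g x ≤ C)
    (hfpos : ∀ x, 0 ≤ f x) (hgpos : ∀ x, 0 ≤ g x)
    (hle : ∀ᵐ x ∂μ, f x ≤ g x) :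
    (∀ s ∈ Set.Ico (0 : ℝ) 1, decRe μ f s ≤ decRe μ g s) ∧
    (Set.EqOn (decRe μ f) (decRe μ g) (Set.Ico (0 : ℝ) 1) → f =ᵐ[μ] g) := by
  obtain ⟨C, hC⟩ := hgb
  have hsub : ∀ t : ℝ, μ {x | t < f x} ≤ μ {x | t < g x} := fun t =>
    measure_mono_ae (hle.mono fun x hx h => lt_of_lt_of_le h hx)
  constructor
  · intro s hs
    rcases Set.eq_empty_or_nonempty {t : ℝ | 0 ≤ t ∧ s < (μ {x | t < f x}).toReal} with he | hne
    · rw [decRe, he, Real.sSup_empty]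
      exact decRe_nonneg μ g s
    · refine csSup_le_csSup (decRe_bddAbove μ g C hC s hs.1) hne ?_
      rintro t ⟨ht0, hts⟩
      refine ⟨ht0, lt_of_lt_of_le hts ?_⟩
      exact ENNReal.toReal_mono (measure_ne_top μ _) (hsub t)
  · intro hEq
    -- key: for 0 ≤ t < t', μ {g > t'} ≤ μ {f > t}
    have key : ∀ t t' : ℝ, 0 ≤ t → t < t' → μ {x | t' < g x} ≤ μ {x | t < f x} := by
      intro t t' ht htt'
      by_contra hcon
      push_neg at hcon
      set s := (μ {x | t < f x}).toReal with hsdef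
      have hs0 : 0 ≤ s := ENNReal.toReal_nonneg
      have hlt : s < (μ {x | t' < g x}).toReal :=
        (ENNReal.toReal_lt_toReal (measure_ne_top μ _) (measure_ne_top μ _)).2 hcon
      have hs1 : s < 1 := by
        refine lt_of_lt_of_le hlt ?_
        have h1 : μ {x | t' < g x} ≤ 1 := prob_le_one
        calc (μ {x | t' < g x}).toReal ≤ (1 : ENNReal).toReal :=
              ENNReal.toReal_mono (by simp) h1
          _ = 1 := by simp
      have hgs : t' ≤ decRe μ g s :=
        le_csSup (decRe_bddAbove μ g C hC s hs0) ⟨ht.trans htt'.le, hlt⟩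
      have hfs : decRe μ f s ≤ t := by
        refine Real.sSup_le ?_ ht
        rintro t'' ⟨ht''0, ht''s⟩
        by_contra h
        push_neg at h
        have : (μ {x | t'' < f x}).toReal ≤ s :=
          ENNReal.toReal_mono (measure_ne_top μ _)
            (measure_mono fun x hx => lt_trans h hx)
        exact absurd ht''s (not_lt.2 this)
      have := hEq ⟨hs0, hs1⟩
      linarith [hgs, hfs, this ▸ hfs]
    -- distribution functions agree for t ≥ 0
    have hdist : ∀ t : ℝ, 0 ≤ t → μ {x | t < g x} = μ {x | t < f x} := by
      intro t ht
      refine le_antisymm ?_ (hsub t)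
      have hUnion : {x | t < g x} = ⋃ n : ℕ, {x | t + 1 / (n + 1) < g x} := by
        ext x
        simp only [Set.mem_setOf_eq, Set.mem_iUnion]
        constructor
        · intro h
          obtain ⟨n, hn⟩ := exists_nat_one_div_lt (sub_pos.2 h)
          exact ⟨n, by push_cast at hn ⊢; linarith⟩
        · rintro ⟨n, hn⟩
          have : (0:ℝ) < 1 / ((n:ℝ) + 1) := by positivity
          linarith
      have hdir : Directed (· ⊆ ·) (fun n : ℕ => {x | t + 1 / (n + 1) < g x}) := by
        refine Monotone.directed_le fun m n hmn => ?_
        intro x hx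
        simp only [Set.mem_setOf_eq] at hx ⊢
        have h1 : (1:ℝ) / ((n:ℝ) + 1) ≤ 1 / ((m:ℝ) + 1) := by
          apply one_div_le_one_div_of_le (by positivity)
          have : (m:ℝ) ≤ (n:ℝ) := Nat.cast_le.2 hmn
          linarith
        linarith
      rw [hUnion, hdir.measure_iUnion]
      refine iSup_le fun n => key t (t + 1 / (n + 1)) ht ?_
      have : (0:ℝ) < 1 / ((n:ℝ) + 1) := by positivity
      linarith
    -- conclude f = g a.e.
    have hAq : ∀ q : ℚ, μ {x | f x < q ∧ (q:ℝ) < g x} = 0 := by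
      intro q
      rcases le_or_gt 0 (q:ℝ) with hq | hq
      · set A := {x | f x < q ∧ (q:ℝ) < g x} with hA
        have hdisj : Disjoint A {x | (q:ℝ) < f x} := by
          rw [Set.disjoint_left]
          rintro x ⟨h1, _⟩ h2
          exact absurd h2 (not_lt.2 h1.le)
        have hmeas : MeasurableSet {x | (q:ℝ) < f x} := measurableSet_lt measurable_const hf
        have hunion : μ (A ∪ {x | (q:ℝ) < f x}) ≤ μ {x | (q:ℝ) < g x} := by
          refine measure_mono_ae (hle.mono fun x hx h => ?_)
          rcases h with h | h
          · exact h.2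
          · exact lt_of_lt_of_le h hx
        rw [measure_union hdisj hmeas] at hunion
        rw [hdist q hq] at hunion
        have hfin : μ {x | (q:ℝ) < f x} ≠ ⊤ := measure_ne_top μ _
        have h0 : μ A + μ {x | (q:ℝ) < f x} ≤ 0 + μ {x | (q:ℝ) < f x} := by
          rw [zero_add]; exact hunion
        have hz := ENNReal.le_of_add_le_add_right hfin h0
        exact le_antisymm hz zero_le
      · have : {x | f x < q ∧ (q:ℝ) < g x} = ∅ := by
          ext x
          simp only [Set.mem_setOf_eq, Set.mem_empty_iff_false, iff_false, not_and]
          intro h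
          linarith [hfpos x]
        simp [this]
    have hN : μ {x | ¬ f x ≤ g x} = 0 := ae_iff.mp hle
    rw [Filter.EventuallyEq, Filter.eventually_iff, mem_ae_iff]
    have hsubset : {x | f x = g x}ᶜ ⊆ {x | ¬ f x ≤ g x} ∪ ⋃ q : ℚ, {x | f x < q ∧ (q:ℝ) < g x} := by
      intro x hx
      simp only [Set.mem_compl_iff, Set.mem_setOf_eq] at hx
      rcases lt_or_gt_of_ne hx with h | h
      · obtain ⟨q, hq1, hq2⟩ := exists_rat_btwn h
        exact Or.inr (Set.mem_iUnion.2 ⟨q, hq1, hq2⟩)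
      · exact Or.inl (not_le.2 h)
    refine measure_mono_null hsubset ?_
    refine measure_union_null hN ?_
    exact measure_iUnion_null hAq
end

section
/- Let γ ∈ ℝ₊^n, d ≤ n, and let L_d(γ) = (max{γ↓_i, c})_{i=1}^d where c ≥ 0 is determined by Σ_{i=1}^d max{γ↓_i, c} = Σ_{i=1}^n γ_i. Then L_d(γ) is a ≺-minimizer: for every β ∈ ℝ₊^d with γ ≺ β, one has L_d(γ) ≺ β. -/
/-- Sum of the `k` largest entries of a finite real vector. -/
noncomputable def kMaxSum {n : ℕ} (a : Fin n → ℝ) (k : ℕ) : ℝ :=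
  sSup ((fun S : Finset (Fin n) => ∑ i ∈ S, a i) '' {S : Finset (Fin n) | S.card = k})

/-- Vector majorization `a ≺ b` (possibly different lengths): partial sums of the
decreasing rearrangements compare, with equal total sums. -/
def Maj {n d : ℕ} (a : Fin n → ℝ) (b : Fin d → ℝ) : Prop :=
  (∀ k : ℕ, k ≤ min n d → kMaxSum a k ≤ kMaxSum b k) ∧ (∑ i, a i) = ∑ i, b i

/-- The decreasing rearrangement of a finite vector. -/
noncomputable def dsort {n : ℕ} (a : Fin n → ℝ) (i : Fin n) : ℝ :=
  kMaxSum a (i + 1) - kMaxSum a i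

namespace WFaux

variable {n : ℕ}

lemma le_kMaxSum (a : Fin n → ℝ) {S : Finset (Fin n)} {k : ℕ} (h : S.card = k) :
    ∑ i ∈ S, a i ≤ kMaxSum a k :=
  le_csSup ((Set.toFinite _).image _).bddAbove ⟨S, h, rfl⟩

lemma kMaxSum_exists (a : Fin n → ℝ) {k : ℕ} (hk : k ≤ n) :
    ∃ S : Finset (Fin n), S.card = k ∧ kMaxSum a k = ∑ i ∈ S, a i := by
  obtain ⟨S, -, hS⟩ := Finset.exists_subset_card_eq
    (show k ≤ (Finset.univ : Finset (Fin n)).card by simpa using hk)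
  have hne : ((fun S : Finset (Fin n) => ∑ i ∈ S, a i) ''
      {S : Finset (Fin n) | S.card = k}).Nonempty := ⟨_, S, hS, rfl⟩
  obtain ⟨T, hT, hval⟩ := hne.csSup_mem ((Set.toFinite _).image _)
  exact ⟨T, hT, hval.symm⟩

lemma kMaxSum_zero (a : Fin n → ℝ) : kMaxSum a 0 = 0 := by
  obtain ⟨S, hS, hval⟩ := kMaxSum_exists a (Nat.zero_le n)
  rw [hval, Finset.card_eq_zero.mp hS, Finset.sum_empty]

lemma kMaxSum_univ (a : Fin n → ℝ) : kMaxSum a n = ∑ i, a i := by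
  obtain ⟨S, hS, hval⟩ := kMaxSum_exists a le_rfl
  have : S = Finset.univ := Finset.eq_univ_of_card S (by simpa using hS)
  rw [hval, this]

lemma sum_range_incr (a : Fin n → ℝ) (k : ℕ) :
    ∑ i ∈ Finset.range k, (kMaxSum a (i + 1) - kMaxSum a i) = kMaxSum a k := by
  rw [Finset.sum_range_sub (fun i => kMaxSum a i), kMaxSum_zero, sub_zero]

lemma kMaxSum_concave (a : Fin n → ℝ) {k : ℕ} (hk : k + 2 ≤ n) :
    kMaxSum a (k + 2) + kMaxSum a k ≤ kMaxSum a (k + 1) + kMaxSum a (k + 1) := by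
  obtain ⟨S, hS, hvS⟩ := kMaxSum_exists a hk
  obtain ⟨T, hT, hvT⟩ := kMaxSum_exists a (by omega : k ≤ n)
  have hns : ¬ S ⊆ T := fun h => by have := Finset.card_le_card h; omega
  obtain ⟨x, hxS, hxT⟩ := Finset.not_subset.mp hns
  have h1 : ∑ i ∈ S.erase x, a i ≤ kMaxSum a (k + 1) :=
    le_kMaxSum a (by rw [Finset.card_erase_of_mem hxS, hS]; omega)
  have h2 : ∑ i ∈ insert x T, a i ≤ kMaxSum a (k + 1) :=
    le_kMaxSum a (by rw [Finset.card_insert_of_notMem hxT, hT])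
  have e1 : ∑ i ∈ S.erase x, a i + a x = ∑ i ∈ S, a i := Finset.sum_erase_add S a hxS
  have e2 : ∑ i ∈ insert x T, a i = a x + ∑ i ∈ T, a i := Finset.sum_insert hxT
  rw [hvS, hvT]; linarith

lemma incr_anti (a : Fin n → ℝ) {i j : ℕ} (hij : i ≤ j) (hj : j + 1 ≤ n) :
    kMaxSum a (j + 1) - kMaxSum a j ≤ kMaxSum a (i + 1) - kMaxSum a i := by
  induction j, hij using Nat.le_induction with
  | base => exact le_rfl
  | succ m him ih =>
    have h2 : m + 2 ≤ n := by omega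
    have := kMaxSum_concave a h2
    have := ih (by omega)
    have : kMaxSum a (m + 1 + 1) - kMaxSum a (m + 1) ≤ kMaxSum a (m + 1) - kMaxSum a m := by
      linarith [kMaxSum_concave a h2]
    linarith [ih (by omega)]


/-- For an antitone vector, `kMaxSum` is the sum of the first `k` entries. -/
lemma kMaxSum_of_antitone (b : Fin n → ℝ) (hb : ∀ i j : Fin n, i ≤ j → b j ≤ b i)
    {k : ℕ} (hk : k ≤ n) :
    kMaxSum b k = ∑ i : Fin k, b (Fin.castLE hk i) := by
  have hS0 : ((Finset.univ : Finset (Fin k)).image (Fin.castLE hk)).card = k := by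
    rw [Finset.card_image_of_injective _ (Fin.castLE_injective hk)]; simp
  apply le_antisymm
  · have hmem : (∑ i ∈ (Finset.univ : Finset (Fin k)).image (Fin.castLE hk), b i) ∈
        ((fun S : Finset (Fin n) => ∑ i ∈ S, b i) '' {S : Finset (Fin n) | S.card = k}) :=
      ⟨_, hS0, rfl⟩
    apply csSup_le ⟨_, hmem⟩
    rintro v ⟨S, hS, rfl⟩
    simp only [Set.mem_setOf_eq] at hS
    show ∑ i ∈ S, b i ≤ _
    set e := S.orderEmbOfFin hS with he
    have key : ∀ m : ℕ, ∀ h : m < k, m ≤ (e ⟨m, h⟩ : ℕ) := by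
      intro m
      induction m with
      | zero => intro h; exact Nat.zero_le _
      | succ p ih =>
        intro h
        have hp : p < k := by omega
        have hlt : e ⟨p, hp⟩ < e ⟨p + 1, h⟩ := e.strictMono (by simp [Fin.lt_def])
        have h1 := ih hp
        have h2 : (e ⟨p, hp⟩ : ℕ) < (e ⟨p + 1, h⟩ : ℕ) := hlt
        omega
    have himg : (Finset.univ : Finset (Fin k)).image (e : Fin k → Fin n) = S := by
      ext x
      simp only [Finset.mem_image, Finset.mem_univ, true_and]
      constructor
      · rintro ⟨i, rfl⟩; exact Finset.orderEmbOfFin_mem S hS i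
      · intro hx
        have : x ∈ Set.range (e : Fin k → Fin n) := by
          rw [Finset.range_orderEmbOfFin S hS]; exact hx
        exact this
    have hsum : ∑ i ∈ S, b i = ∑ i : Fin k, b (e i) := by
      rw [← himg, Finset.sum_image (fun x _ y _ h => e.injective h)]
    rw [hsum]
    apply Finset.sum_le_sum
    intro i _
    exact hb _ _ (by rw [Fin.le_def]; exact key i.1 i.2)
  · have := le_kMaxSum b hS0
    rwa [Finset.sum_image (fun x _ y _ h => Fin.castLE_injective hk h)] at this

/-- Threshold decomposition of `∑ max (x i) c` for a locally antitone `x`. -/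
lemma split_sum (x : ℕ → ℝ) (c : ℝ) :
    ∀ k : ℕ, (∀ i j : ℕ, i ≤ j → j < k → x j ≤ x i) →
    ∃ j : ℕ, j ≤ k ∧
      (∑ i ∈ Finset.range k, max (x i) c) =
        (∑ i ∈ Finset.range j, x i) + ((k : ℝ) - j) * c := by
  intro k
  induction k with
  | zero => exact fun _ => ⟨0, le_rfl, by simp⟩
  | succ k ih =>
    intro hmono
    by_cases hcase : x k ≤ c
    · obtain ⟨j, hj, hEq⟩ := ih (fun i j hij hjk => hmono i j hij (by omega))
      refine ⟨j, by omega, ?_⟩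
      rw [Finset.sum_range_succ, hEq, max_eq_right hcase]
      push_cast; ring
    · refine ⟨k + 1, le_rfl, ?_⟩
      have : ∀ i ∈ Finset.range (k + 1), max (x i) c = x i := by
        intro i hi
        have hik : i ≤ k := by simpa using Nat.lt_succ_iff.mp (Finset.mem_range.mp hi)
        exact max_eq_left ((le_of_not_ge hcase).trans (hmono i k hik (by omega)))
      rw [Finset.sum_congr rfl this]
      push_cast; ring


end WFaux

open WFaux in
/-- the discrete waterfilling `L_d(γ)` is a `≺`-minimizer among all
`β ∈ ℝ₊^d` with `γ ≺ β`. -/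
theorem discrete_waterfilling_minimizer {n d : ℕ} (hd : d ≤ n) (γ : Fin n → ℝ)
    (hγ : ∀ i, 0 ≤ γ i) (c : ℝ) (hc : 0 ≤ c)
    (hsum : (∑ i : Fin d, max (dsort γ (Fin.castLE hd i)) c) = ∑ i, γ i) :
    ∀ β : Fin d → ℝ, (∀ i, 0 ≤ β i) → Maj γ β →
      Maj (fun i : Fin d => max (dsort γ (Fin.castLE hd i)) c) β := by
  intro β hβ hγβ
  classical
  set L : Fin d → ℝ := fun i => max (dsort γ (Fin.castLE hd i)) c with hLdef
  set x : ℕ → ℝ := fun m => kMaxSum γ (m + 1) - kMaxSum γ m with hxdef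
  set y : ℕ → ℝ := fun m => kMaxSum β (m + 1) - kMaxSum β m with hydef
  have hmaj : ∀ k : ℕ, k ≤ d → kMaxSum γ k ≤ kMaxSum β k := by
    intro k hk
    exact hγβ.1 k (by rw [min_eq_right hd]; exact hk)
  have hxanti : ∀ i j : ℕ, i ≤ j → j < n → x j ≤ x i :=
    fun i j hij hj => incr_anti γ hij hj
  have hyanti : ∀ i j : ℕ, i ≤ j → j < d → y j ≤ y i :=
    fun i j hij hj => incr_anti β hij hj
  have sumx : ∀ j : ℕ, ∑ i ∈ Finset.range j, x i = kMaxSum γ j :=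
    fun j => sum_range_incr γ j
  have sumy : ∀ j : ℕ, ∑ i ∈ Finset.range j, y i = kMaxSum β j :=
    fun j => sum_range_incr β j
  have hLx : ∀ i : Fin d, L i = max (x i.1) c := fun i => rfl
  have hLanti : ∀ i j : Fin d, i ≤ j → L j ≤ L i := by
    intro i j hij
    rw [hLx i, hLx j]
    exact max_le_max (hxanti i.1 j.1 hij (lt_of_lt_of_le j.2 hd)) le_rfl
  have hkL : ∀ k : ℕ, (hk : k ≤ d) → kMaxSum L k = ∑ m ∈ Finset.range k, max (x m) c := by
    intro k hk
    rw [kMaxSum_of_antitone L hLanti hk]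
    rw [← Fin.sum_univ_eq_sum_range (fun m => max (x m) c) k]
    rfl
  have hsumL : ∑ i, L i = ∑ i, β i := hsum.trans hγβ.2
  have hFd : kMaxSum β d = ∑ i, β i := kMaxSum_univ β
  have hAd : ∑ m ∈ Finset.range d, max (x m) c = ∑ i, β i := by
    rw [← Fin.sum_univ_eq_sum_range (fun m => max (x m) c) d]
    exact hsumL
  constructor
  · intro k hk
    rw [min_self] at hk
    rw [hkL k hk]
    by_cases hcase : ∀ m : ℕ, m < k → c ≤ y m
    · obtain ⟨j, hjk, hEq⟩ := split_sum x c k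
        (fun i j hij hjk => hxanti i j hij (lt_of_lt_of_le hjk (hk.trans hd)))
      rw [hEq, sumx j]
      have h1 : kMaxSum γ j ≤ kMaxSum β j := hmaj j (hjk.trans hk)
      have h2 : ((k : ℝ) - j) * c ≤ ∑ m ∈ Finset.Ico j k, y m := by
        have h := Finset.card_nsmul_le_sum (Finset.Ico j k) y c
          (fun m hm => hcase m (Finset.mem_Ico.mp hm).2)
        rw [Nat.card_Ico, nsmul_eq_mul, Nat.cast_sub hjk] at h
        exact h
      have h3 : ∑ m ∈ Finset.Ico j k, y m = kMaxSum β k - kMaxSum β j := by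
        rw [Finset.sum_Ico_eq_sub _ hjk, sumy, sumy]
      linarith
    · push_neg at hcase
      obtain ⟨m, hmk, hmc⟩ := hcase
      have h4 : kMaxSum β d - kMaxSum β k ≤ ((d : ℝ) - k) * c := by
        have h5 : ∑ i ∈ Finset.Ico k d, y i ≤ ((d : ℝ) - k) * c := by
          have h := Finset.sum_le_card_nsmul (Finset.Ico k d) y c
            (fun i hi => by
              have hm := Finset.mem_Ico.mp hi
              exact (hyanti m i (by omega) hm.2).trans hmc.le)
          rw [Nat.card_Ico, nsmul_eq_mul, Nat.cast_sub hk] at h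
          exact h
        rw [← sumy d, ← sumy k, ← Finset.sum_Ico_eq_sub _ hk]
        exact h5
      have h6 : ((d : ℝ) - k) * c ≤ ∑ m ∈ Finset.Ico k d, max (x m) c := by
        have h := Finset.card_nsmul_le_sum (Finset.Ico k d) (fun m => max (x m) c) c
          (fun m _ => le_max_right _ _)
        rw [Nat.card_Ico, nsmul_eq_mul, Nat.cast_sub hk] at h
        exact h
      have h7 : ∑ m ∈ Finset.Ico k d, max (x m) c =
          (∑ m ∈ Finset.range d, max (x m) c) - ∑ m ∈ Finset.range k, max (x m) c :=
        Finset.sum_Ico_eq_sub _ hk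
      linarith
  · exact hsumL
end

section
/- Let α ∈ ℝ_{>0}^n, p ∈ ℝ_{>0}^m, and d₁ < ⋯ < d_m positive integers. Define W_{α,p} = { B ∈ ℝ₊^{m×n} : pᵀB = α } and, for B ∈ W_{α,p}, let M(B) = { (λ_i)_{i=1}^m : λ_i ∈ (ℝ₊^{d_i})↓ and R_i(B) ≺ λ_i for each i }, where R_i(B) is the i-th row. Then the set Λ_{α,p}(δ) = ⋃_{B ∈ W_{α,p}} M(B) is convex. -/
section aux
variable {n k : ℕ}

lemma kMaxSum_bdd (a : Fin n → ℝ) (k : ℕ) :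
    BddAbove ((fun S : Finset (Fin n) => ∑ i ∈ S, a i) '' {S : Finset (Fin n) | S.card = k}) :=
  ((Set.toFinite _).image _).bddAbove

lemma le_kMaxSum (a : Fin n → ℝ) {S : Finset (Fin n)} {k : ℕ} (hS : S.card = k) :
    ∑ i ∈ S, a i ≤ kMaxSum a k :=
  le_csSup (kMaxSum_bdd a k) ⟨S, hS, rfl⟩

lemma exists_card (hk : k ≤ n) : ∃ S : Finset (Fin n), S.card = k := by
  obtain ⟨t, -, ht⟩ := Finset.exists_subset_card_eq
    (show k ≤ (Finset.univ : Finset (Fin n)).card by simpa using hk)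
  exact ⟨t, ht⟩

lemma kMaxSum_le (a : Fin n → ℝ) {k : ℕ} (hk : k ≤ n) {c : ℝ}
    (h : ∀ S : Finset (Fin n), S.card = k → ∑ i ∈ S, a i ≤ c) : kMaxSum a k ≤ c := by
  obtain ⟨S₀, hS₀⟩ := exists_card hk
  exact csSup_le ⟨_, ⟨S₀, hS₀, rfl⟩⟩ (by rintro x ⟨S, hS, rfl⟩; exact h S hS)

lemma strictMono_nat_le {k : ℕ} (f : Fin k → ℕ) (hf : StrictMono f) (j : Fin k) :
    (j : ℕ) ≤ f j := by
  obtain ⟨j, hj⟩ := j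
  induction j with
  | zero => exact Nat.zero_le _
  | succ i ih =>
      have h1 : i ≤ f ⟨i, Nat.lt_of_succ_lt hj⟩ := ih (Nat.lt_of_succ_lt hj)
      have h2 : f ⟨i, Nat.lt_of_succ_lt hj⟩ < f ⟨i + 1, hj⟩ := hf (by simp [Fin.lt_def])
      have h3 : ((⟨i + 1, hj⟩ : Fin k) : ℕ) = i + 1 := rfl
      omega

lemma kMaxSum_antitone {a : Fin n → ℝ} (ha : Antitone a) {k : ℕ} (hk : k ≤ n) :
    kMaxSum a k = ∑ j : Fin k, a (Fin.castLE hk j) := by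
  apply le_antisymm
  · apply kMaxSum_le a hk
    intro S hS
    have hmap : S = Finset.univ.map (S.orderEmbOfFin hS).toEmbedding := by
      ext x
      simp only [Finset.mem_map, Finset.mem_univ, true_and, RelEmbedding.coe_toEmbedding]
      constructor
      · intro hx
        have : x ∈ Set.range (S.orderEmbOfFin hS) := by
          rw [Finset.range_orderEmbOfFin]; exact hx
        exact this
      · rintro ⟨j, rfl⟩; exact Finset.orderEmbOfFin_mem S hS j
    rw [hmap, Finset.sum_map]
    apply Finset.sum_le_sum
    intro j _
    apply ha
    rw [Fin.le_def]
    exact strictMono_nat_le (fun j => ((S.orderEmbOfFin hS j : Fin n) : ℕ))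
      (fun i j hij => by exact_mod_cast (S.orderEmbOfFin hS).strictMono hij) j
  · have hc : (Finset.univ.map (Fin.castLEEmb hk)).card = k := by simp
    calc ∑ j : Fin k, a (Fin.castLE hk j)
        = ∑ i ∈ Finset.univ.map (Fin.castLEEmb hk), a i := by rw [Finset.sum_map]; rfl
      _ ≤ kMaxSum a k := le_kMaxSum a hc

end aux

/-- the set `Λ_{α,p}(δ)` of spectra compatible with the weighted
partitions `W_{α,p}` is convex. -/
theorem Lambda_convex {m n : ℕ} (α : Fin n → ℝ) (hα : ∀ j, 0 < α j)
    (p : Fin m → ℝ) (hp : ∀ i, 0 < p i) (d : Fin m → ℕ) (hd : ∀ i, 0 < d i)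
    (hmono : StrictMono d) :
    Convex ℝ { Λ : (i : Fin m) → (Fin (d i) → ℝ) |
      ∃ B : Matrix (Fin m) (Fin n) ℝ,
        (∀ i j, 0 ≤ B i j) ∧ (∀ j, (∑ i, p i * B i j) = α j) ∧
        ∀ i : Fin m, (∀ k, 0 ≤ Λ i k) ∧ Antitone (Λ i) ∧ Maj (B i) (Λ i) } := by
  rintro x ⟨B, hB0, hBα, hBx⟩ y ⟨C, hC0, hCα, hCy⟩ t s ht hs hts
  refine ⟨t • B + s • C, ?_, ?_, ?_⟩
  · intro i j
    have := hB0 i j; have := hC0 i j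
    simp only [Matrix.add_apply, Matrix.smul_apply, smul_eq_mul]
    positivity
  · intro j
    have : ∑ i, p i * (t * B i j + s * C i j)
        = t * ∑ i, p i * B i j + s * ∑ i, p i * C i j := by
      rw [Finset.mul_sum, Finset.mul_sum, ← Finset.sum_add_distrib]
      apply Finset.sum_congr rfl; intro i _; ring
    simp only [Matrix.add_apply, Matrix.smul_apply, smul_eq_mul]
    rw [this, hBα j, hCα j]
    have : t * α j + s * α j = (t + s) * α j := by ring
    rw [this, hts, one_mul]
  · intro i
    obtain ⟨hx0, hxa, hxm1, hxm2⟩ := hBx i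
    obtain ⟨hy0, hya, hym1, hym2⟩ := hCy i
    have happ : ∀ kk, (t • x + s • y) i kk = t * x i kk + s * y i kk := by
      intro kk; simp [Pi.add_apply, Pi.smul_apply, smul_eq_mul]
    refine ⟨?_, ?_, ?_, ?_⟩
    · intro kk
      rw [happ]
      have := hx0 kk; have := hy0 kk
      positivity
    · intro a b hab
      rw [happ, happ]
      exact add_le_add (mul_le_mul_of_nonneg_left (hxa hab) ht)
        (mul_le_mul_of_nonneg_left (hya hab) hs)
    · intro k hk
      have hkn : k ≤ n := hk.trans (min_le_left _ _)
      have hkd : k ≤ d i := hk.trans (min_le_right _ _)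
      have hcomb : Antitone ((t • x + s • y) i) := by
        intro a b hab
        rw [happ, happ]
        exact add_le_add (mul_le_mul_of_nonneg_left (hxa hab) ht)
          (mul_le_mul_of_nonneg_left (hya hab) hs)
      have hrow : ∀ j, (t • B + s • C) i j = t * B i j + s * C i j := by
        intro j; simp [Matrix.add_apply, Matrix.smul_apply, smul_eq_mul]
      have step1 : kMaxSum ((t • B + s • C) i) k ≤ t * kMaxSum (B i) k + s * kMaxSum (C i) k := by
        apply kMaxSum_le _ hkn
        intro S hS
        have : ∑ j ∈ S, (t • B + s • C) i j = t * ∑ j ∈ S, B i j + s * ∑ j ∈ S, C i j := by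
          rw [Finset.mul_sum, Finset.mul_sum, ← Finset.sum_add_distrib]
          exact Finset.sum_congr rfl fun j _ => hrow j
        rw [this]
        exact add_le_add (mul_le_mul_of_nonneg_left (le_kMaxSum _ hS) ht)
          (mul_le_mul_of_nonneg_left (le_kMaxSum _ hS) hs)
      have step2 : t * kMaxSum (B i) k + s * kMaxSum (C i) k
          ≤ t * kMaxSum (x i) k + s * kMaxSum (y i) k :=
        add_le_add (mul_le_mul_of_nonneg_left (hxm1 k hk) ht)
          (mul_le_mul_of_nonneg_left (hym1 k hk) hs)
      have step3 : t * kMaxSum (x i) k + s * kMaxSum (y i) k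
          = kMaxSum ((t • x + s • y) i) k := by
        rw [kMaxSum_antitone hxa hkd, kMaxSum_antitone hya hkd, kMaxSum_antitone hcomb hkd,
          Finset.mul_sum, Finset.mul_sum, ← Finset.sum_add_distrib]
        exact Finset.sum_congr rfl fun j _ => (happ _).symm
      exact step1.trans (step2.trans step3.le)
    · have : ∑ j, (t • B + s • C) i j = t * ∑ j, B i j + s * ∑ j, C i j := by
        rw [Finset.mul_sum, Finset.mul_sum, ← Finset.sum_add_distrib]
        apply Finset.sum_congr rfl; intro j _
        simp [Matrix.add_apply, Matrix.smul_apply, smul_eq_mul]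
      rw [this, hxm2, hym2]
      rw [Finset.mul_sum, Finset.mul_sum, ← Finset.sum_add_distrib]
      exact Finset.sum_congr rfl fun j _ => by
        simp [Pi.add_apply, Pi.smul_apply, smul_eq_mul]
end
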